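/- arXiv:1701.06897 — 2 statements merged into one kernel-verified Lean document; each statement's English description precedes it below -/
import Mathlib

section
/- There exists a constant C < ∞ such that for all finitely supported sequences (a_m)_{m≥2} and (b_n)_{n≥2} of complex numbers, |∑_{m=2}^∞ ∑_{n=2}^∞ a_m b_n (mn)^{-1/2} (log(mn))^{-2}| ≤ C (∑_{m=2}^∞ |a_m|²/d(m))^{1/2} (∑_{n=2}^∞ |b_n|²/d(n))^{1/2}. (This is the boundedness on 𝒜²₀ × 𝒜²₀ of the form H(fg) = ∫_{1/2}^∞ f(σ)g(σ)(σ−1/2) dσ, using the identity ∫_{1/2}^∞ (mn)^{-σ}(σ−1/2) dσ = (mn)^{-1/2}(log mn)^{-2}.) -/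
open MeasureTheory Real Finset

private lemma harm : ∀ c : ℕ, ∑ e ∈ Finset.Icc 1 c, (1:ℝ)/e ≤ 1 + Real.log c := by
  intro c
  induction c with
  | zero => simp
  | succ n ih =>
    rcases Nat.eq_zero_or_pos n with h0 | h1
    · subst h0; simp
    · rw [Finset.sum_Icc_succ_top (by omega)]
      have hn : (0:ℝ) < n := by exact_mod_cast h1
      have key : (1:ℝ)/(n+1) ≤ Real.log (n+1) - Real.log n := by
        have h := Real.log_le_sub_one_of_pos (x := (n:ℝ)/(n+1)) (by positivity)
        rw [Real.log_div (by positivity) (by positivity)] at h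
        have h2 : (n:ℝ)/(n+1) - 1 = -(1/(n+1)) := by field_simp; ring
        linarith
      push_cast
      linarith

private lemma teles (L : ℝ) (hL : 0 < L) :
    ∀ N : ℕ, ∑ c ∈ Finset.Icc 2 N, 1/((c:ℝ)*(L+Real.log c)^2) ≤ 1/L - 1/(L + Real.log N) := by
  intro N
  induction N with
  | zero => simp
  | succ n ih =>
    rcases Nat.lt_or_ge n 1 with h0 | h1
    · interval_cases n <;> simp
    · rw [Finset.sum_Icc_succ_top (by omega)]
      have hn : (1:ℝ) ≤ n := by exact_mod_cast h1
      have hx : (0:ℝ) ≤ Real.log n := Real.log_nonneg hn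
      have hy : Real.log n ≤ Real.log (n+1) := by
        apply Real.log_le_log (by linarith); push_cast; linarith
      have key : Real.log (n+1) - Real.log n ≥ 1/((n:ℝ)+1) := by
        have h := Real.log_le_sub_one_of_pos (x := (n:ℝ)/(n+1)) (by positivity)
        rw [Real.log_div (by positivity) (by positivity)] at h
        have h2 : (n:ℝ)/(n+1) - 1 = -(1/(n+1)) := by field_simp; ring
        linarith
      have hpos1 : 0 < L + Real.log n := by linarith
      have hpos2 : 0 < L + Real.log (n+1) := by linarith
      have step : 1/(((n:ℕ)+1:ℝ)*(L+Real.log ((n:ℕ)+1:ℝ))^2)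
          ≤ 1/(L + Real.log n) - 1/(L + Real.log (n+1)) := by
        have e1 : 1/(L + Real.log n) - 1/(L + Real.log (n+1))
            = (Real.log (n+1) - Real.log n)/((L+Real.log n)*(L+Real.log (n+1))) := by
          field_simp
          ring
        rw [e1, div_le_div_iff₀ (by positivity) (by positivity)]
        have hn1 : (0:ℝ) < (n:ℝ)+1 := by linarith
        have h3 : 1 ≤ (Real.log (n+1) - Real.log n)*((n:ℝ)+1) := by
          rw [ge_iff_le, div_le_iff₀ (by linarith)] at key; linarith
        have h4 : (L+Real.log n)*(L+Real.log (n+1)) ≤ (L+Real.log (n+1))^2 := by nlinarith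
        nlinarith [mul_le_mul_of_nonneg_right h3 (sq_nonneg (L+Real.log ((n:ℝ)+1)))]
      push_cast at step ⊢
      linarith

private noncomputable def gfun (L : ℝ) (c : ℕ) : ℝ :=
  1/((c:ℝ)*(L+Real.log c)^2*Real.log c)

private lemma gfun_nonneg (L : ℝ) (hL : 0 < L) (c : ℕ) : 0 ≤ gfun L c := by
  unfold gfun
  have h1 : (0:ℝ) ≤ Real.log c := by
    rcases Nat.eq_zero_or_pos c with h | h
    · subst h; simp
    · exact Real.log_natCast_nonneg c
  positivity

private lemma gbound (L : ℝ) (hL : 0 < L) {n c e : ℕ} (h2 : 2 ≤ c)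
    (hmul : c * e = n) (he : 1 ≤ e) :
    gfun L n ≤ (1/(e:ℝ)) * gfun L c := by
  have hcn : c ≤ n := by nlinarith [hmul, he]
  have hc1 : (1:ℝ) < c := by exact_mod_cast h2
  have hlogc : 0 < Real.log c := Real.log_pos hc1
  have hlcn : Real.log c ≤ Real.log n := by
    apply Real.log_le_log (by linarith) (by exact_mod_cast hcn)
  have hn : (n:ℝ) = (c:ℝ)*(e:ℝ) := by exact_mod_cast hmul.symm
  have he' : (1:ℝ) ≤ (e:ℝ) := by exact_mod_cast he
  have heq : (1/(e:ℝ)) * gfun L c = 1/((e:ℝ)*((c:ℝ)*(L+Real.log c)^2*Real.log c)) := by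
    unfold gfun; rw [one_div_mul_one_div]
  rw [heq]
  unfold gfun
  apply one_div_le_one_div_of_le (by positivity)
  have hsq : (L+Real.log c)^2 ≤ (L+Real.log n)^2 := by nlinarith
  have hprod : (L+Real.log c)^2 * Real.log c ≤ (L+Real.log n)^2 * Real.log n :=
    mul_le_mul hsq hlcn hlogc.le (by positivity)
  have hn0 : (0:ℝ) ≤ (n:ℝ) := by positivity
  have h5 : (e:ℝ)*((c:ℝ)*(L+Real.log c)^2*Real.log c)
      = (n:ℝ)*((L+Real.log c)^2*Real.log c) := by rw [hn]; ring
  have h6 := mul_le_mul_of_nonneg_left hprod hn0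
  nlinarith [h5, h6]

set_option maxHeartbeats 1000000 in
private lemma lemA (L : ℝ) (hL : Real.log 2 ≤ L) (N : ℕ) :
    ∑ n ∈ Finset.Icc 2 N, ((n.divisors.card : ℝ) / ((n:ℝ) * (L + Real.log n)^2 * Real.log n))
      ≤ 5 / L := by
  have hL0 : 0 < L := lt_of_lt_of_le (Real.log_pos (by norm_num)) hL
  -- rewrite as sigma sum
  have h1 : ∑ n ∈ Finset.Icc 2 N,
      ((n.divisors.card : ℝ) / ((n:ℝ) * (L + Real.log n)^2 * Real.log n))
      = ∑ x ∈ (Finset.Icc 2 N).sigma (fun n => n.divisors), gfun L x.1 := by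
    rw [Finset.sum_sigma]
    refine Finset.sum_congr rfl fun n _ => ?_
    simp only [Finset.sum_const, nsmul_eq_mul, gfun, mul_one_div]
  rw [h1]
  -- the target sum
  set T : ℝ := ∑ y ∈ (Finset.Icc 2 N).sigma (fun c => Finset.Icc 1 c),
      (1/(y.2:ℝ)) * gfun L y.1 with hT
  have htnonneg : ∀ y ∈ (Finset.Icc 2 N).sigma (fun c => Finset.Icc 1 c),
      0 ≤ (1/(y.2:ℝ)) * gfun L y.1 := by
    intro y _
    have := gfun_nonneg L hL0 y.1
    positivity
  -- generic half bound
  have half : ∀ (s : Finset ((_ : ℕ) × ℕ)) (φ : ((_ : ℕ) × ℕ) → ((_ : ℕ) × ℕ)),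
      (∀ x ∈ s, gfun L x.1 ≤ (1/((φ x).2:ℝ)) * gfun L (φ x).1) →
      (∀ x ∈ s, φ x ∈ (Finset.Icc 2 N).sigma (fun c => Finset.Icc 1 c)) →
      (∀ x ∈ s, ∀ y ∈ s, φ x = φ y → x = y) →
      ∑ x ∈ s, gfun L x.1 ≤ T := by
    intro s φ hmono himg hinj
    calc ∑ x ∈ s, gfun L x.1 ≤ ∑ x ∈ s, (1/((φ x).2:ℝ)) * gfun L (φ x).1 :=
          Finset.sum_le_sum hmono
      _ = ∑ y ∈ s.image φ, (1/(y.2:ℝ)) * gfun L y.1 :=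
          (Finset.sum_image (g := φ) (f := fun (y : (_ : ℕ) × ℕ) => (1/(y.2:ℝ)) * gfun L y.1) hinj).symm
      _ ≤ T := by
          apply Finset.sum_le_sum_of_subset_of_nonneg
          · intro y hy
            obtain ⟨x, hx, rfl⟩ := Finset.mem_image.mp hy
            exact himg x hx
          · intro y hy _
            exact htnonneg y hy
  -- facts about members of the source sigma set
  have hmem : ∀ x ∈ (Finset.Icc 2 N).sigma (fun n => n.divisors),
      2 ≤ x.1 ∧ x.1 ≤ N ∧ x.2 ∣ x.1 ∧ 1 ≤ x.2 := by
    intro x hx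
    rw [Finset.mem_sigma, Finset.mem_Icc, Nat.mem_divisors] at hx
    exact ⟨hx.1.1, hx.1.2, hx.2.1, Nat.pos_of_dvd_of_pos hx.2.1 (by omega)⟩
  -- split the sigma sum
  rw [← Finset.sum_filter_add_sum_filter_not
      ((Finset.Icc 2 N).sigma (fun n => n.divisors)) (fun x => x.2 * x.2 ≤ x.1)
      (fun x => gfun L x.1)]
  have hhalf1 : ∑ x ∈ ((Finset.Icc 2 N).sigma (fun n => n.divisors)).filter
      (fun x => x.2 * x.2 ≤ x.1), gfun L x.1 ≤ T := by
    apply half _ (fun x => ⟨x.1 / x.2, x.2⟩)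
    · intro x hx
      rw [Finset.mem_filter] at hx
      obtain ⟨h2, hN, hdvd, he⟩ := hmem x hx.1
      have hmul : (x.1 / x.2) * x.2 = x.1 := Nat.div_mul_cancel hdvd
      have hc2 : 2 ≤ x.1 / x.2 := by nlinarith [hx.2, Nat.le_of_dvd (by omega) hdvd]
      exact gbound L hL0 hc2 hmul he
    · intro x hx
      rw [Finset.mem_filter] at hx
      obtain ⟨h2, hN, hdvd, he⟩ := hmem x hx.1
      have hmul : (x.1 / x.2) * x.2 = x.1 := Nat.div_mul_cancel hdvd
      rw [Finset.mem_sigma, Finset.mem_Icc, Finset.mem_Icc]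
      refine ⟨⟨?_, ?_⟩, he, ?_⟩
      · nlinarith [hx.2]
      · calc x.1 / x.2 ≤ x.1 := Nat.div_le_self _ _
          _ ≤ N := hN
      · -- x.2 ≤ x.1 / x.2
        nlinarith [hx.2, hmul]
    · intro x hx y hy hxy
      rw [Finset.mem_filter] at hx hy
      obtain ⟨_, _, hdx, _⟩ := hmem x hx.1
      obtain ⟨_, _, hdy, _⟩ := hmem y hy.1
      have h1 : x.2 = y.2 := congrArg (fun z => z.2) hxy
      have h2 : x.1 / x.2 = y.1 / y.2 := congrArg (fun z => z.1) hxy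
      have : x.1 = y.1 := by
        rw [← Nat.div_mul_cancel hdx, ← Nat.div_mul_cancel hdy, h2, h1]
      exact Sigma.ext this (heq_of_eq h1)
  have hhalf2 : ∑ x ∈ ((Finset.Icc 2 N).sigma (fun n => n.divisors)).filter
      (fun x => ¬ x.2 * x.2 ≤ x.1), gfun L x.1 ≤ T := by
    apply half _ (fun x => ⟨x.2, x.1 / x.2⟩)
    · intro x hx
      rw [Finset.mem_filter] at hx
      obtain ⟨h2, hN, hdvd, he⟩ := hmem x hx.1
      have hmul : x.2 * (x.1 / x.2) = x.1 := Nat.mul_div_cancel' hdvd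
      have hc2 : 2 ≤ x.2 := by nlinarith [Nat.not_le.mp hx.2]
      have he2 : 1 ≤ x.1 / x.2 := Nat.one_le_div_iff (by omega) |>.mpr (Nat.le_of_dvd (by omega) hdvd)
      exact gbound L hL0 hc2 hmul he2
    · intro x hx
      rw [Finset.mem_filter] at hx
      obtain ⟨h2, hN, hdvd, he⟩ := hmem x hx.1
      have hmul : x.2 * (x.1 / x.2) = x.1 := Nat.mul_div_cancel' hdvd
      have hlt := Nat.not_le.mp hx.2
      rw [Finset.mem_sigma, Finset.mem_Icc, Finset.mem_Icc]
      refine ⟨⟨?_, ?_⟩, ?_, ?_⟩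
      · nlinarith
      · exact le_trans (Nat.le_of_dvd (by omega) hdvd) hN
      · exact Nat.one_le_div_iff (by omega) |>.mpr (Nat.le_of_dvd (by omega) hdvd)
      · -- x.1 / x.2 ≤ x.2
        nlinarith [hmul]
    · intro x hx y hy hxy
      rw [Finset.mem_filter] at hx hy
      obtain ⟨_, _, hdx, _⟩ := hmem x hx.1
      obtain ⟨_, _, hdy, _⟩ := hmem y hy.1
      have h1 : x.2 = y.2 := congrArg (fun z => z.1) hxy
      have h2 : x.1 / x.2 = y.1 / y.2 := by
        have := congrArg (fun z => z.2) hxy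
        simpa using this
      have : x.1 = y.1 := by
        rw [← Nat.div_mul_cancel hdx, ← Nat.div_mul_cancel hdy, h2, h1]
      exact Sigma.ext this (heq_of_eq h1)
  -- bound T
  have hTbound : T ≤ 5/2/L := by
    rw [hT, Finset.sum_sigma]
    have hstep : ∀ c ∈ Finset.Icc 2 N,
        ∑ e ∈ Finset.Icc 1 c, (1/(e:ℝ)) * gfun L c ≤ (5/2) * (1/((c:ℝ)*(L+Real.log c)^2)) := by
      intro c hc
      rw [Finset.mem_Icc] at hc
      have hc1 : (1:ℝ) < c := by exact_mod_cast hc.1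
      have hlogc : 0 < Real.log c := Real.log_pos hc1
      have hlog2 : Real.log 2 ≤ Real.log c := by
        apply Real.log_le_log (by norm_num)
        exact_mod_cast hc.1
      have hgc := gfun_nonneg L hL0 c
      rw [← Finset.sum_mul]
      calc (∑ e ∈ Finset.Icc 1 c, (1/(e:ℝ))) * gfun L c
          ≤ (1 + Real.log c) * gfun L c := by
            apply mul_le_mul_of_nonneg_right (harm c) hgc
        _ ≤ (5/2) * (1/((c:ℝ)*(L+Real.log c)^2)) := by
            unfold gfun
            have hX : (0:ℝ) < (c:ℝ)*(L+Real.log c)^2 := by positivity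
            rw [mul_one_div, mul_one_div, div_le_div_iff₀ (by positivity) hX]
            have hl2 : (0.6931471803:ℝ) < Real.log 2 := Real.log_two_gt_d9
            nlinarith [mul_le_mul_of_nonneg_left (by nlinarith : (1:ℝ) + Real.log c ≤ (5/2) * Real.log c) hX.le]
    calc ∑ c ∈ Finset.Icc 2 N, ∑ e ∈ Finset.Icc 1 c, (1/(e:ℝ)) * gfun L c
        ≤ ∑ c ∈ Finset.Icc 2 N, (5/2) * (1/((c:ℝ)*(L+Real.log c)^2)) :=
          Finset.sum_le_sum hstep
      _ = (5/2) * ∑ c ∈ Finset.Icc 2 N, 1/((c:ℝ)*(L+Real.log c)^2) := by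
          rw [Finset.mul_sum]
      _ ≤ (5/2) * (1/L) := by
          have := teles L hL0 N
          have hNlog : (0:ℝ) ≤ Real.log N := by
            rcases Nat.eq_zero_or_pos N with h | h
            · subst h; simp
            · exact Real.log_natCast_nonneg N
          have h2 : 0 < L + Real.log N := by linarith
          have : ∑ c ∈ Finset.Icc 2 N, 1/((c:ℝ)*(L+Real.log c)^2) ≤ 1/L := by
            have h3 : 0 ≤ 1/(L + Real.log N) := by positivity
            linarith
          linarith
      _ = 5/2/L := by ring
  have harith : 5/2/L + 5/2/L = 5/L := by ring
  linarith [hhalf1, hhalf2, hTbound]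

private noncomputable def Kf (m n : ℕ) : ℝ :=
  ((m * n : ℕ) : ℝ) ^ (-(1 / 2 : ℝ)) * Real.log ((m * n : ℕ) : ℝ) ^ (-(2 : ℝ))

private noncomputable def rf (n : ℕ) : ℝ := (n:ℝ) ^ (-(1/2:ℝ)) / Real.log n

private lemma Kf_nonneg (m n : ℕ) : 0 ≤ Kf m n := by
  unfold Kf
  have h1 : (0:ℝ) ≤ ((m*n : ℕ):ℝ) := by positivity
  have h2 : (0:ℝ) ≤ Real.log ((m*n : ℕ):ℝ) := by
    rcases Nat.eq_zero_or_pos (m*n) with h | h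
    · rw [h]; simp
    · exact Real.log_natCast_nonneg _
  positivity

private lemma rf_pos {n : ℕ} (hn : 2 ≤ n) : 0 < rf n := by
  unfold rf
  have h1 : (0:ℝ) < (n:ℝ)^(-(1/2:ℝ)) := by
    apply Real.rpow_pos_of_pos
    exact_mod_cast Nat.lt_of_lt_of_le Nat.zero_lt_two hn
  have h2 : (0:ℝ) < Real.log n := Real.log_pos (by exact_mod_cast hn)
  positivity

private lemma Kf_comm (m n : ℕ) : Kf m n = Kf n m := by
  unfold Kf; rw [Nat.mul_comm]

private lemma Kf_eq {m n : ℕ} (hm : 2 ≤ m) (hn : 2 ≤ n) :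
    Kf m n * ((n.divisors.card : ℝ) * rf n)
      = (m:ℝ)^(-(1/2:ℝ)) *
        ((n.divisors.card : ℝ) / ((n:ℝ) * (Real.log m + Real.log n)^2 * Real.log n)) := by
  have hm0 : (0:ℝ) < m := by exact_mod_cast Nat.lt_of_lt_of_le Nat.zero_lt_two hm
  have hn0 : (0:ℝ) < n := by exact_mod_cast Nat.lt_of_lt_of_le Nat.zero_lt_two hn
  have hlm : 0 < Real.log m := Real.log_pos (by exact_mod_cast hm)
  have hln : 0 < Real.log n := Real.log_pos (by exact_mod_cast hn)
  have hcast : ((m * n : ℕ) : ℝ) = (m:ℝ) * (n:ℝ) := by push_cast; ring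
  unfold Kf rf
  rw [hcast, Real.log_mul (ne_of_gt hm0) (ne_of_gt hn0),
    Real.mul_rpow hm0.le hn0.le]
  have hsum : 0 < Real.log m + Real.log n := by linarith
  have h2 : (Real.log m + Real.log n) ^ (-(2:ℝ))
      = 1/(Real.log m + Real.log n)^2 := by
    rw [Real.rpow_neg hsum.le, Real.rpow_two, one_div]
  have h3 : (n:ℝ)^(-(1/2:ℝ)) * (n:ℝ)^(-(1/2:ℝ)) = ((n:ℝ))⁻¹ := by
    rw [← Real.rpow_add hn0]
    norm_num [Real.rpow_neg_one]
  rw [h2]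
  have hne : (n:ℝ) ≠ 0 := ne_of_gt hn0
  set t := (n:ℝ)^(-(1/2:ℝ)) with ht
  set u := (m:ℝ)^(-(1/2:ℝ)) with hu
  have h4 : t^2 * (n:ℝ) = 1 := by
    rw [sq, h3]; exact inv_mul_cancel₀ hne
  field_simp
  linear_combination (u * ((n.divisors.card:ℕ):ℝ)) * h4

private lemma schur {m : ℕ} (hm : 2 ≤ m) (N : ℕ) :
    ∑ n ∈ Finset.Icc 2 N, Kf m n * ((n.divisors.card : ℝ) * rf n) ≤ 5 * rf m := by
  have hm1 : (1:ℝ) < m := by exact_mod_cast hm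
  have hlm : 0 < Real.log m := Real.log_pos hm1
  have hL : Real.log 2 ≤ Real.log m := Real.log_le_log (by norm_num) (by exact_mod_cast hm)
  have h1 : ∀ n ∈ Finset.Icc 2 N, Kf m n * ((n.divisors.card : ℝ) * rf n)
      = (m:ℝ)^(-(1/2:ℝ)) *
        ((n.divisors.card : ℝ) / ((n:ℝ)*(Real.log m + Real.log n)^2*Real.log n)) := by
    intro n hn
    exact Kf_eq hm (Finset.mem_Icc.mp hn).1
  rw [Finset.sum_congr rfl h1, ← Finset.mul_sum]
  have h2 := lemA (Real.log m) hL N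
  have hm0 : (0:ℝ) ≤ (m:ℝ)^(-(1/2:ℝ)) := Real.rpow_nonneg (by positivity) _
  calc (m:ℝ)^(-(1/2:ℝ)) * ∑ n ∈ Finset.Icc 2 N,
        ((n.divisors.card : ℝ) / ((n:ℝ)*(Real.log m + Real.log n)^2*Real.log n))
      ≤ (m:ℝ)^(-(1/2:ℝ)) * (5/Real.log m) := mul_le_mul_of_nonneg_left h2 hm0
    _ = 5 * rf m := by unfold rf; ring

private lemma Dpos {n : ℕ} (hn : 2 ≤ n) : (0:ℝ) < (n.divisors.card : ℝ) := by
  have h1 : 1 ∈ n.divisors := Nat.one_mem_divisors.mpr (by omega)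
  exact_mod_cast Finset.card_pos.mpr ⟨1, h1⟩

set_option maxHeartbeats 1000000 in
private lemma mainlem (N : ℕ) (a b : ℕ → ℂ) :
    ‖(∑ m ∈ Finset.Icc 2 N, ∑ n ∈ Finset.Icc 2 N,
        a m * b n * ((Kf m n : ℝ) : ℂ))‖
      ≤ 5 * Real.sqrt (∑ m ∈ Finset.Icc 2 N, ‖a m‖ ^ 2 / (m.divisors.card : ℝ)) *
          Real.sqrt (∑ n ∈ Finset.Icc 2 N, ‖b n‖ ^ 2 / (n.divisors.card : ℝ)) := by
  set I := Finset.Icc 2 N with hI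
  set A := ∑ m ∈ I, ‖a m‖ ^ 2 / (m.divisors.card : ℝ) with hA
  set B := ∑ n ∈ I, ‖b n‖ ^ 2 / (n.divisors.card : ℝ) with hB
  have hA0 : 0 ≤ A := Finset.sum_nonneg fun m _ => by positivity
  have hB0 : 0 ≤ B := Finset.sum_nonneg fun n _ => by positivity
  set w : ℕ → ℝ := fun n => (n.divisors.card : ℝ) * rf n with hw
  have hwpos : ∀ n ∈ I, 0 < w n := fun n hn =>
    mul_pos (Dpos (Finset.mem_Icc.mp hn).1) (rf_pos (Finset.mem_Icc.mp hn).1)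
  set u : ℕ × ℕ → ℝ := fun p => Real.sqrt (‖a p.1‖^2 * Kf p.1 p.2 * (w p.2 / w p.1))
    with hu
  set v : ℕ × ℕ → ℝ := fun p => Real.sqrt (‖b p.2‖^2 * Kf p.1 p.2 * (w p.1 / w p.2))
    with hv
  have step1 : ‖∑ m ∈ I, ∑ n ∈ I, a m * b n * ((Kf m n : ℝ) : ℂ)‖
      ≤ ∑ m ∈ I, ∑ n ∈ I, ‖a m‖ * ‖b n‖ * Kf m n := by
    refine le_trans (norm_sum_le _ _) (Finset.sum_le_sum fun m _ => ?_)
    refine le_trans (norm_sum_le _ _) (Finset.sum_le_sum fun n _ => ?_)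
    rw [norm_mul, norm_mul, Complex.norm_real, Real.norm_eq_abs, abs_of_nonneg (Kf_nonneg m n)]
  have huv : ∀ p ∈ I ×ˢ I, u p * v p
      = ‖a p.1‖ * ‖b p.2‖ * Kf p.1 p.2 := by
    intro p hp
    rw [Finset.mem_product] at hp
    have h1 := hwpos _ hp.1
    have h2 := hwpos _ hp.2
    have hK := Kf_nonneg p.1 p.2
    rw [hu, hv]
    dsimp only
    rw [← Real.sqrt_mul (by positivity)]
    have heq : ‖a p.1‖^2 * Kf p.1 p.2 * (w p.2 / w p.1) *
        (‖b p.2‖^2 * Kf p.1 p.2 * (w p.1 / w p.2))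
        = (‖a p.1‖ * ‖b p.2‖ * Kf p.1 p.2)^2 := by
      field_simp
    rw [heq, Real.sqrt_sq (by positivity)]
  have hu2 : ∑ p ∈ I ×ˢ I, u p ^ 2 ≤ 5 * A := by
    have heq : ∀ p ∈ I ×ˢ I, u p ^ 2
        = ‖a p.1‖^2 / w p.1 * (Kf p.1 p.2 * w p.2) := by
      intro p hp
      rw [Finset.mem_product] at hp
      have h1 := hwpos _ hp.1
      have h2 := hwpos _ hp.2
      have hK := Kf_nonneg p.1 p.2
      rw [hu]
      dsimp only
      rw [Real.sq_sqrt (by positivity)]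
      field_simp
    rw [Finset.sum_congr rfl heq, Finset.sum_product]
    have hbnd : ∀ m ∈ I, ∑ n ∈ I, ‖a m‖^2 / w m * (Kf m n * w n)
        ≤ 5 * (‖a m‖^2 / (m.divisors.card : ℝ)) := by
      intro m hm
      have hm2 := (Finset.mem_Icc.mp hm).1
      have hrm := rf_pos hm2
      have hDm := Dpos hm2
      rw [← Finset.mul_sum]
      calc ‖a m‖^2 / w m * (∑ n ∈ I, Kf m n * w n)
          ≤ ‖a m‖^2 / w m * (5 * rf m) := by
            apply mul_le_mul_of_nonneg_left _ (by positivity)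
            exact schur hm2 N
        _ = 5 * (‖a m‖^2 / (m.divisors.card : ℝ)) := by
            rw [hw]
            dsimp only
            field_simp
    calc ∑ m ∈ I, ∑ n ∈ I, ‖a m‖^2 / w m * (Kf m n * w n)
        ≤ ∑ m ∈ I, 5 * (‖a m‖^2 / (m.divisors.card : ℝ)) :=
          Finset.sum_le_sum hbnd
      _ = 5 * A := by rw [hA, Finset.mul_sum]
  have hv2 : ∑ p ∈ I ×ˢ I, v p ^ 2 ≤ 5 * B := by
    have heq : ∀ p ∈ I ×ˢ I, v p ^ 2
        = ‖b p.2‖^2 / w p.2 * (Kf p.2 p.1 * w p.1) := by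
      intro p hp
      rw [Finset.mem_product] at hp
      have h1 := hwpos _ hp.1
      have h2 := hwpos _ hp.2
      have hK := Kf_nonneg p.1 p.2
      rw [hv]
      dsimp only
      rw [Real.sq_sqrt (by positivity), Kf_comm p.1 p.2]
      field_simp
    rw [Finset.sum_congr rfl heq, Finset.sum_product, Finset.sum_comm]
    have hbnd : ∀ n ∈ I, ∑ m ∈ I, ‖b n‖^2 / w n * (Kf n m * w m)
        ≤ 5 * (‖b n‖^2 / (n.divisors.card : ℝ)) := by
      intro n hn
      have hn2 := (Finset.mem_Icc.mp hn).1
      have hrn := rf_pos hn2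
      have hDn := Dpos hn2
      rw [← Finset.mul_sum]
      calc ‖b n‖^2 / w n * (∑ m ∈ I, Kf n m * w m)
          ≤ ‖b n‖^2 / w n * (5 * rf n) := by
            apply mul_le_mul_of_nonneg_left _ (by positivity)
            exact schur hn2 N
        _ = 5 * (‖b n‖^2 / (n.divisors.card : ℝ)) := by
            rw [hw]
            dsimp only
            field_simp
    calc ∑ n ∈ I, ∑ m ∈ I, ‖b n‖^2 / w n * (Kf n m * w m)
        ≤ ∑ n ∈ I, 5 * (‖b n‖^2 / (n.divisors.card : ℝ)) :=
          Finset.sum_le_sum hbnd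
      _ = 5 * B := by rw [hB, Finset.mul_sum]
  have hS0 : 0 ≤ ∑ p ∈ I ×ˢ I, u p * v p :=
    Finset.sum_nonneg fun p _ => mul_nonneg (Real.sqrt_nonneg _) (Real.sqrt_nonneg _)
  have hcs := Finset.sum_mul_sq_le_sq_mul_sq (I ×ˢ I) u v
  have hsq2 : 0 ≤ ∑ p ∈ I ×ˢ I, v p ^ 2 := Finset.sum_nonneg fun p _ => sq_nonneg _
  have h2 : (∑ p ∈ I ×ˢ I, u p * v p)^2 ≤ (5*A)*(5*B) :=
    le_trans hcs (mul_le_mul hu2 hv2 hsq2 (by linarith))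
  have h3 : ∑ m ∈ I, ∑ n ∈ I, ‖a m‖ * ‖b n‖ * Kf m n
      = ∑ p ∈ I ×ˢ I, u p * v p := by
    rw [Finset.sum_congr rfl huv, Finset.sum_product]
  have h5 : (5*Real.sqrt A*Real.sqrt B)^2 = (5*A)*(5*B) := by
    rw [mul_pow, mul_pow, Real.sq_sqrt hA0, Real.sq_sqrt hB0]
    ring
  have h4 : ∑ p ∈ I ×ˢ I, u p * v p ≤ 5*Real.sqrt A*Real.sqrt B := by
    have h8 : (0:ℝ) ≤ 5*Real.sqrt A*Real.sqrt B :=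
      mul_nonneg (mul_nonneg (by norm_num) (Real.sqrt_nonneg A)) (Real.sqrt_nonneg B)
    have h7 : (∑ p ∈ I ×ˢ I, u p * v p)^2 ≤ (5*Real.sqrt A*Real.sqrt B)^2 := by
      rw [h5]; exact h2
    exact (abs_le_of_sq_le_sq' h7 h8).2
  linarith [step1, h3 ▸ h4]

/-- Boundedness of the multiplicative Hilbert-type Hankel form on `𝒜²₀ × 𝒜²₀`:
there is a constant `C` such that for all finitely supported coefficient
sequences, `|∑_{m,n≥2} a_m b_n (mn)^{-1/2} (log mn)^{-2}|
  ≤ C (∑ |a_m|²/d(m))^{1/2} (∑ |b_n|²/d(n))^{1/2}`,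
where `d(n)` is the number of divisors of `n`. -/
theorem statement11 :
    ∃ C : ℝ, ∀ (N : ℕ) (a b : ℕ → ℂ),
      ‖(∑ m ∈ Finset.Icc 2 N, ∑ n ∈ Finset.Icc 2 N,
          a m * b n *
            ((((m * n : ℕ) : ℝ) ^ (-(1 / 2 : ℝ)) * Real.log ((m * n : ℕ) : ℝ) ^ (-(2 : ℝ)) : ℝ) : ℂ))‖
        ≤ C * Real.sqrt (∑ m ∈ Finset.Icc 2 N, ‖a m‖ ^ 2 / (m.divisors.card : ℝ)) *
            Real.sqrt (∑ n ∈ Finset.Icc 2 N, ‖b n‖ ^ 2 / (n.divisors.card : ℝ)) := by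
  exact ⟨5, fun N a b => mainlem N a b⟩
end

section
/- For every real α with 1 < α < 2, the series ∑_{n=2}^∞ d(n) α^{Ω(n)} / (n (log n)⁴) converges, where d(n) is the number of divisors of n and Ω(n) is the number of prime factors of n counted with multiplicity. -/
open Real Finset MeasureTheory

namespace Statement15Aux

/-- `Ω n`, number of prime factors with multiplicity. -/
def OmN (n : ℕ) : ℕ := n.factorization.sum fun _ k => k

lemma OmN_zero : OmN 0 = 0 := by simp [OmN]

lemma OmN_one : OmN 1 = 0 := by simp [OmN]

lemma OmN_mul {a b : ℕ} (ha : a ≠ 0) (hb : b ≠ 0) : OmN (a * b) = OmN a + OmN b := by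
  unfold OmN
  rw [Nat.factorization_mul ha hb]
  exact Finsupp.sum_add_index' (fun _ => rfl) (fun _ _ _ => rfl)

lemma OmN_prime {p : ℕ} (hp : p.Prime) : OmN p = 1 := by
  simp [OmN, hp.factorization]

/-- The completely multiplicative function `n ↦ β^(Ω n) n^(-σ)` as a `MonoidHom`. -/
noncomputable def gm (β σ : ℝ) (hσ : 0 < σ) : ℕ →* ℝ where
  toFun n := β ^ OmN n * (n : ℝ) ^ (-σ)
  map_one' := by simp [OmN_one]
  map_mul' m n := by
    rcases eq_or_ne m 0 with rfl | hm
    · simp [OmN_zero, Real.zero_rpow (neg_ne_zero.mpr hσ.ne')]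
    rcases eq_or_ne n 0 with rfl | hn
    · simp [OmN_zero, Real.zero_rpow (neg_ne_zero.mpr hσ.ne')]
    · rw [OmN_mul hm hn, pow_add, Nat.cast_mul,
        Real.mul_rpow (Nat.cast_nonneg m) (Nat.cast_nonneg n)]
      ring

lemma gm_apply (β σ : ℝ) (hσ : 0 < σ) (n : ℕ) :
    gm β σ hσ n = β ^ OmN n * (n : ℝ) ^ (-σ) := rfl

lemma gm_zero (β σ : ℝ) (hσ : 0 < σ) : gm β σ hσ 0 = 0 := by
  rw [gm_apply, OmN_zero, Nat.cast_zero, Real.zero_rpow (neg_ne_zero.mpr hσ.ne'), pow_zero,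
    one_mul]

lemma gm_nonneg {β σ : ℝ} (hβ : 0 ≤ β) (hσ : 0 < σ) (n : ℕ) : 0 ≤ gm β σ hσ n := by
  rw [gm_apply]
  positivity

lemma rpow_prime_lt_half {p : ℕ} (hp : p.Prime) {σ : ℝ} (hσ : 1 < σ) :
    (p : ℝ) ^ (-σ) < 1 / 2 := by
  have hp2 : (2 : ℝ) ≤ p := by exact_mod_cast hp.two_le
  have h2 : (2 : ℝ) < (p : ℝ) ^ σ := by
    calc (2:ℝ) = 2 ^ (1:ℝ) := by rw [Real.rpow_one]
    _ < 2 ^ σ := Real.rpow_lt_rpow_of_exponent_lt one_lt_two hσ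
    _ ≤ (p:ℝ) ^ σ := Real.rpow_le_rpow (by norm_num) hp2 (by linarith)
  rw [Real.rpow_neg (Nat.cast_nonneg p)]
  rw [inv_lt_comm₀ (by positivity) (by norm_num)]
  simpa using h2

lemma rpow_prime_pos {p : ℕ} (hp : p.Prime) (σ : ℝ) : 0 < (p : ℝ) ^ (-σ) :=
  Real.rpow_pos_of_pos (by exact_mod_cast hp.pos) _

lemma gm_prime_lt_one {β σ : ℝ} (hβ0 : 0 < β) (hβ : β < 2) (hσ : 1 < σ) {p : ℕ}
    (hp : p.Prime) : ‖gm β σ (by linarith) p‖ < 1 := by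
  rw [gm_apply, OmN_prime hp, pow_one, Real.norm_eq_abs,
    abs_of_nonneg (by positivity : (0:ℝ) ≤ β * (p:ℝ) ^ (-σ))]
  have h1 := rpow_prime_lt_half hp hσ
  have h2 := rpow_prime_pos hp σ
  nlinarith

/-- Summability of `n ↦ n^(-σ)`. -/
lemma summable_rpow_neg {σ : ℝ} (hσ : 1 < σ) : Summable fun n : ℕ => (n : ℝ) ^ (-σ) := by
  have := Real.summable_one_div_nat_rpow.mpr hσ
  exact this.congr fun n => by rw [Real.rpow_neg (Nat.cast_nonneg n), one_div]

/-- Zeta bound: `∑ n^(-σ) ≤ 1 + 1/(σ-1)`. -/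
lemma zeta_bound {σ : ℝ} (hσ : 1 < σ) : ∑' n : ℕ, (n : ℝ) ^ (-σ) ≤ 1 + 1 / (σ - 1) := by
  have hsum := summable_rpow_neg hσ
  rw [Summable.tsum_eq_zero_add hsum]
  have h0 : ((0:ℕ) : ℝ) ^ (-σ) = 0 := by
    rw [Nat.cast_zero, Real.zero_rpow (by linarith : -σ ≠ 0)]
  rw [h0, zero_add]
  have hσ0 : (0:ℝ) < σ := by linarith
  have hz := ZetaAsymptotics.term_tsum_of_lt hσ
  have hnn : 0 ≤ ZetaAsymptotics.termTSum σ :=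
    tsum_nonneg fun n => ZetaAsymptotics.term_nonneg _ _
  set Z := ∑' n : ℕ, 1 / ((n:ℝ) + 1) ^ σ with hZdef
  have hZ : Z ≤ σ / (σ - 1) := by
    rw [hz] at hnn
    have h' : 1 / σ * Z ≤ 1 / (σ - 1) := by linarith
    calc Z = σ * (1 / σ * Z) := by field_simp
      _ ≤ σ * (1 / (σ - 1)) := mul_le_mul_of_nonneg_left h' hσ0.le
      _ = σ / (σ - 1) := by ring
  calc ∑' n : ℕ, ((n + 1 : ℕ) : ℝ) ^ (-σ) = Z := by
        refine tsum_congr fun n => ?_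
        rw [show ((n + 1 : ℕ) : ℝ) = (n : ℝ) + 1 by push_cast; ring,
          Real.rpow_neg (by positivity), one_div]
    _ ≤ σ / (σ - 1) := hZ
    _ = 1 + 1 / (σ - 1) := by
        have hne : σ - 1 ≠ 0 := by linarith
        field_simp
        ring

/-- Partial sums bounded by the Euler product. -/
lemma sum_le_prod_primesBelow {f : ℕ →* ℝ} (h : ∀ {p : ℕ}, p.Prime → ‖f p‖ < 1)
    (hf0 : f 0 = 0) (hnn : ∀ n, 0 ≤ f n) (F : Finset ℕ) (N : ℕ) (hN : ∀ n ∈ F, n < N) :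
    ∑ n ∈ F, f n ≤ ∏ p ∈ N.primesBelow, (1 - f p)⁻¹ := by
  obtain ⟨hs, hhs⟩ :=
    EulerProduct.summable_and_hasSum_smoothNumbers_prod_primesBelow_geometric h N
  have hsummable : Summable (Set.indicator (N.smoothNumbers) f) := by
    rw [← summable_subtype_iff_indicator]
    exact hs.of_norm
  have htsum : ∑' n : ℕ, Set.indicator (N.smoothNumbers) f n
      = ∏ p ∈ N.primesBelow, (1 - f p)⁻¹ := by
    rw [← _root_.tsum_subtype N.smoothNumbers (⇑f)]
    exact hhs.tsum_eq
  have hmem : ∀ n ∈ F, f n ≤ Set.indicator (N.smoothNumbers) f n := by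
    intro n hn
    rcases eq_or_ne n 0 with rfl | hn0
    · rw [hf0]
      exact Set.indicator_nonneg (fun m _ => hnn m) 0
    · have : n ∈ N.smoothNumbers := by
        rw [Nat.mem_smoothNumbers]
        refine ⟨hn0, fun p hp => ?_⟩
        have hdvd : p ∣ n := Nat.dvd_of_mem_primeFactorsList hp
        exact lt_of_le_of_lt (Nat.le_of_dvd (Nat.pos_of_ne_zero hn0) hdvd) (hN n hn)
      rw [Set.indicator_of_mem this]
  calc ∑ n ∈ F, f n ≤ ∑ n ∈ F, Set.indicator (N.smoothNumbers) f n :=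
        Finset.sum_le_sum hmem
    _ ≤ ∑' n : ℕ, Set.indicator (N.smoothNumbers) f n :=
        Summable.sum_le_tsum F (fun n _ => Set.indicator_nonneg (fun m _ => hnn m) n) hsummable
    _ = _ := htsum

/-- Euler product of `(1-p^{-σ})⁻¹` is at most `1 + 1/(σ-1)`. -/
lemma prod_primesBelow_le {σ : ℝ} (hσ : 1 < σ) (N : ℕ) :
    ∏ p ∈ N.primesBelow, (1 - (p : ℝ) ^ (-σ))⁻¹ ≤ 1 + 1 / (σ - 1) := by
  have hσ0 : (0:ℝ) < σ := by linarith
  set f := gm 1 σ hσ0 with hf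
  have hplt : ∀ {p : ℕ}, p.Prime → ‖f p‖ < 1 := fun hp => by
    have := gm_prime_lt_one one_pos one_lt_two hσ (p := _) hp
    convert this using 3
  obtain ⟨hs, hhs⟩ :=
    EulerProduct.summable_and_hasSum_smoothNumbers_prod_primesBelow_geometric hplt N
  have hfp : ∀ p : ℕ, p.Prime → f p = (p:ℝ) ^ (-σ) := by
    intro p hp
    rw [hf, gm_apply, OmN_prime hp, pow_one, one_mul]
  have hprodeq : ∏ p ∈ N.primesBelow, (1 - f p)⁻¹
      = ∏ p ∈ N.primesBelow, (1 - (p : ℝ) ^ (-σ))⁻¹ :=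
    Finset.prod_congr rfl fun p hp => by
      rw [hfp p (Nat.prime_of_mem_primesBelow hp)]
  rw [← hprodeq]
  have hfn : ∀ n : ℕ, f n = (n:ℝ) ^ (-σ) := fun n => by
    rw [hf, gm_apply, one_pow, one_mul]
  calc ∏ p ∈ N.primesBelow, (1 - f p)⁻¹
      = ∑' n : ℕ, Set.indicator (N.smoothNumbers) f n := by
        rw [← _root_.tsum_subtype N.smoothNumbers (⇑f)]
        exact hhs.tsum_eq.symm
    _ ≤ ∑' n : ℕ, (n : ℝ) ^ (-σ) := by
        refine Summable.tsum_le_tsum ?_ ?_ (summable_rpow_neg hσ)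
        · intro n
          rw [← hfn n]
          exact Set.indicator_le_self' (fun m _ => gm_nonneg zero_le_one hσ0 m) n
        · rw [← summable_subtype_iff_indicator]
          exact hs.of_norm
    _ ≤ 1 + 1 / (σ - 1) := zeta_bound hσ

/-- Sum of `p^{-2σ}` over primes below `N` is at most 1. -/
lemma sum_sq_le_one {σ : ℝ} (hσ : 1 < σ) (N : ℕ) :
    ∑ p ∈ N.primesBelow, ((p : ℝ) ^ (-σ)) ^ 2 ≤ 1 := by
  have hsub : N.primesBelow ⊆ Finset.Ico 2 N := by
    intro p hp
    exact Finset.mem_Ico.mpr ⟨(Nat.prime_of_mem_primesBelow hp).two_le,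
      Nat.lt_of_mem_primesBelow hp⟩
  have step1 : ∑ p ∈ N.primesBelow, ((p : ℝ) ^ (-σ)) ^ 2
      ≤ ∑ p ∈ Finset.Ico 2 N, (1 / ((p:ℝ) - 1) - 1 / p) := by
    refine (Finset.sum_le_sum_of_subset_of_nonneg hsub ?_).trans (Finset.sum_le_sum ?_)
    · intro p _ _; positivity
    · intro p hp
      have hp2 : (2:ℝ) ≤ p := by exact_mod_cast (Finset.mem_Ico.mp hp).1
      have hp0 : (0:ℝ) < p := by linarith
      have hp1 : (0:ℝ) < (p:ℝ) - 1 := by linarith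
      have hple : (p:ℝ)^(-σ) ≤ (p:ℝ)⁻¹ := by
        rw [show (p:ℝ)⁻¹ = (p:ℝ)^(-1:ℝ) by rw [Real.rpow_neg_one]]
        exact Real.rpow_le_rpow_of_exponent_le (by linarith) (by linarith)
      have hnn : (0:ℝ) ≤ (p:ℝ)^(-σ) := Real.rpow_nonneg (by positivity) _
      have h2 : ((p:ℝ)⁻¹) ^ 2 ≤ 1 / (((p:ℝ) - 1) * p) := by
        rw [inv_pow, one_div, inv_le_inv₀ (by positivity) (by nlinarith)]
        nlinarith
      have h3 : 1 / (((p:ℝ) - 1) * p) = 1 / ((p:ℝ) - 1) - 1 / p := by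
        field_simp
        ring
      nlinarith
  refine step1.trans ?_
  rw [Finset.sum_Ico_eq_sum_range]
  calc ∑ i ∈ Finset.range (N - 2), (1 / (((2 + i : ℕ):ℝ) - 1) - 1 / ((2 + i : ℕ):ℝ))
      = ∑ i ∈ Finset.range (N - 2), (1 / ((i:ℝ) + 1) - 1 / (((i + 1 : ℕ) : ℝ) + 1)) := by
        refine Finset.sum_congr rfl fun i _ => ?_
        push_cast
        ring_nf
    _ = 1 / (((0:ℕ):ℝ) + 1) - 1 / (((N - 2 : ℕ):ℝ) + 1) := by
        exact Finset.sum_range_sub' (fun i => 1 / ((i:ℝ) + 1)) (N - 2)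
    _ ≤ 1 := by
        have : (0:ℝ) ≤ 1 / ((N - 2 : ℕ) + 1 : ℝ) := by positivity
        norm_num
        linarith

/-- Pointwise key inequality. -/
lemma key_ineq {α u : ℝ} (h1 : 1 < α) (h2 : α < 2) (hu : 0 < u) (hu2 : u ≤ 1 / 2) :
    (1 - α * u)⁻¹ ≤ Real.exp (α * (-Real.log (1 - u)) + α ^ 2 / (1 - α / 2) * u ^ 2) := by
  have hau : α * u < 1 := by nlinarith
  have h1au : 0 < 1 - α * u := by linarith
  have h1u : 0 < 1 - u := by nlinarith
  have hden : 0 < 1 - α / 2 := by linarith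
  rw [show (1 - α * u)⁻¹ = Real.exp (-Real.log (1 - α * u)) by
    rw [Real.exp_neg, Real.exp_log h1au]]
  apply Real.exp_le_exp.mpr
  have key1 : -Real.log (1 - α * u) ≤ α * u / (1 - α * u) := by
    have h := Real.log_le_sub_one_of_pos (inv_pos.mpr h1au)
    rw [Real.log_inv] at h
    calc -Real.log (1 - α * u) ≤ (1 - α * u)⁻¹ - 1 := h
      _ = α * u / (1 - α * u) := by field_simp; ring
  have key2 : u ≤ -Real.log (1 - u) := by
    have := Real.log_le_sub_one_of_pos h1u
    linarith
  have key3 : α * u / (1 - α * u) ≤ α * u + α ^ 2 / (1 - α / 2) * u ^ 2 := by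
    rw [div_le_iff₀ h1au]
    have hc : α ^ 2 ≤ α ^ 2 / (1 - α / 2) * (1 - α * u) := by
      rw [div_mul_eq_mul_div, le_div_iff₀ hden]
      have : 1 - α / 2 ≤ 1 - α * u := by nlinarith
      nlinarith [sq_nonneg α]
    nlinarith [sq_nonneg u, hu.le]
  calc -Real.log (1 - α * u) ≤ α * u / (1 - α * u) := key1
    _ ≤ α * u + α ^ 2 / (1 - α / 2) * u ^ 2 := key3
    _ ≤ α * (-Real.log (1 - u)) + α ^ 2 / (1 - α / 2) * u ^ 2 := by
        have := mul_le_mul_of_nonneg_left key2 (by linarith : (0:ℝ) ≤ α)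
        linarith

/-- Key Lemma A: partial sums of `α^(Ω n) n^(-σ)` are uniformly bounded. -/
lemma lemA {α σ : ℝ} (h1 : 1 < α) (h2 : α < 2) (hσ : 1 < σ) (F : Finset ℕ) :
    ∑ n ∈ F, α ^ OmN n * (n : ℝ) ^ (-σ) ≤
      (1 + 1 / (σ - 1)) ^ α * Real.exp (α ^ 2 / (1 - α / 2)) := by
  have hσ0 : (0:ℝ) < σ := by linarith
  have hα0 : (0:ℝ) < α := by linarith
  set f := gm α σ hσ0 with hf
  set N := (F.sup id) + 1 with hN
  have hNlt : ∀ n ∈ F, n < N := fun n hn =>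
    Nat.lt_succ_of_le (Finset.le_sup (f := id) hn)
  have hplt : ∀ {p : ℕ}, p.Prime → ‖f p‖ < 1 := fun hp => by
    have := gm_prime_lt_one hα0 h2 hσ (p := _) hp
    convert this using 3
  have hsum_le := sum_le_prod_primesBelow hplt (gm_zero α σ hσ0)
    (gm_nonneg hα0.le hσ0) F N hNlt
  have hZb : (0:ℝ) < 1 + 1 / (σ - 1) := by
    have hσ1 : (0:ℝ) < σ - 1 := by linarith
    have : (0:ℝ) < 1 / (σ - 1) := by positivity
    linarith
  -- bound the product
  have hprod : ∏ p ∈ N.primesBelow, (1 - f p)⁻¹ ≤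
      (1 + 1 / (σ - 1)) ^ α * Real.exp (α ^ 2 / (1 - α / 2)) := by
    set C0 := α ^ 2 / (1 - α / 2) with hC0
    have hstep : ∀ p ∈ N.primesBelow, (1 - f p)⁻¹ ≤
        Real.exp (α * (-Real.log (1 - (p:ℝ) ^ (-σ))) + C0 * ((p:ℝ) ^ (-σ)) ^ 2) := by
      intro p hp
      have hpp := Nat.prime_of_mem_primesBelow hp
      rw [hf, gm_apply, OmN_prime hpp, pow_one]
      exact key_ineq h1 h2 (rpow_prime_pos hpp σ) (rpow_prime_lt_half hpp hσ).le
    calc ∏ p ∈ N.primesBelow, (1 - f p)⁻¹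
        ≤ ∏ p ∈ N.primesBelow,
            Real.exp (α * (-Real.log (1 - (p:ℝ) ^ (-σ))) + C0 * ((p:ℝ) ^ (-σ)) ^ 2) := by
          refine Finset.prod_le_prod ?_ hstep
          intro p hp
          have hpp := Nat.prime_of_mem_primesBelow hp
          have h1p : (p:ℝ) ^ (-σ) < 1 / 2 := rpow_prime_lt_half hpp hσ
          have : f p = α * (p:ℝ) ^ (-σ) := by
            rw [hf, gm_apply, OmN_prime hpp, pow_one]
          rw [this, inv_nonneg]
          nlinarith [rpow_prime_pos hpp σ]
      _ = Real.exp (∑ p ∈ N.primesBelow,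
            (α * (-Real.log (1 - (p:ℝ) ^ (-σ))) + C0 * ((p:ℝ) ^ (-σ)) ^ 2)) := by
          rw [Real.exp_sum]
      _ ≤ (1 + 1 / (σ - 1)) ^ α * Real.exp C0 := by
          rw [Finset.sum_add_distrib, ← Finset.mul_sum, ← Finset.mul_sum]
          have hlogsum : ∑ p ∈ N.primesBelow, -Real.log (1 - (p:ℝ) ^ (-σ))
              ≤ Real.log (1 + 1 / (σ - 1)) := by
            rw [Real.le_log_iff_exp_le hZb, Real.exp_sum]
            calc ∏ p ∈ N.primesBelow, Real.exp (-Real.log (1 - (p:ℝ) ^ (-σ)))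
                = ∏ p ∈ N.primesBelow, (1 - (p:ℝ) ^ (-σ))⁻¹ := by
                  refine Finset.prod_congr rfl fun p hp => ?_
                  have hpp := Nat.prime_of_mem_primesBelow hp
                  have h1p := rpow_prime_lt_half hpp hσ
                  rw [Real.exp_neg, Real.exp_log (by linarith)]
              _ ≤ 1 + 1 / (σ - 1) := prod_primesBelow_le hσ N
          have hsq := sum_sq_le_one hσ N
          have hC0nn : 0 ≤ C0 := by
            rw [hC0]
            have : (0:ℝ) < 1 - α / 2 := by linarith
            positivity
          have : α * ∑ p ∈ N.primesBelow, -Real.log (1 - (p:ℝ) ^ (-σ))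
              + C0 * ∑ p ∈ N.primesBelow, ((p:ℝ) ^ (-σ)) ^ 2
              ≤ α * Real.log (1 + 1 / (σ - 1)) + C0 := by
            have h1' := mul_le_mul_of_nonneg_left hlogsum hα0.le
            have h2' := mul_le_mul_of_nonneg_left hsq hC0nn
            linarith
          calc Real.exp _ ≤ Real.exp (α * Real.log (1 + 1 / (σ - 1)) + C0) :=
                Real.exp_le_exp.mpr this
            _ = (1 + 1 / (σ - 1)) ^ α * Real.exp C0 := by
                rw [Real.exp_add, Real.rpow_def_of_pos hZb, mul_comm α]
  calc ∑ n ∈ F, α ^ OmN n * (n : ℝ) ^ (-σ) = ∑ n ∈ F, f n := by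
        refine Finset.sum_congr rfl fun n _ => ?_
        rw [hf, gm_apply]
    _ ≤ ∏ p ∈ N.primesBelow, (1 - f p)⁻¹ := hsum_le
    _ ≤ _ := hprod

/-- Key Lemma B: partial sums of `d(n) α^(Ω n) n^(-σ)`. -/
lemma lemB {α σ : ℝ} (h1 : 1 < α) (h2 : α < 2) (hσ : 1 < σ) (F : Finset ℕ) :
    ∑ n ∈ F, (n.divisors.card : ℝ) * α ^ OmN n * (n : ℝ) ^ (-σ) ≤
      ((1 + 1 / (σ - 1)) ^ α * Real.exp (α ^ 2 / (1 - α / 2))) ^ 2 := by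
  classical
  have hσ0 : (0:ℝ) < σ := by linarith
  have hα0 : (0:ℝ) < α := by linarith
  set f := gm α σ hσ0 with hf
  have hnn : ∀ n, 0 ≤ f n := gm_nonneg hα0.le hσ0
  -- identity: d(n) * f n = sum over divisorsAntidiagonal
  have hid : ∀ n : ℕ, (n.divisors.card : ℝ) * α ^ OmN n * (n : ℝ) ^ (-σ)
      = ∑ x ∈ n.divisorsAntidiagonal, f x.1 * f x.2 := by
    intro n
    have : (n.divisors.card : ℝ) * α ^ OmN n * (n : ℝ) ^ (-σ)
        = (n.divisors.card : ℝ) * f n := by rw [hf, gm_apply]; ring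
    rw [this]
    rcases eq_or_ne n 0 with rfl | hn
    · simp [gm_zero]
    · have heach : ∀ x ∈ n.divisorsAntidiagonal, f x.1 * f x.2 = f n := by
        intro x hx
        rw [← map_mul, (Nat.mem_divisorsAntidiagonal.mp hx).1]
      rw [Finset.sum_congr rfl heach, Finset.sum_const, nsmul_eq_mul,
        ← Nat.map_div_right_divisors, Finset.card_map]
  rw [Finset.sum_congr rfl fun n _ => hid n]
  -- convolution bound
  have hdisj : (F : Set ℕ).PairwiseDisjoint Nat.divisorsAntidiagonal := by
    intro a _ b _ hab
    simp only [Finset.disjoint_left]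
    intro x hxa hxb
    exact hab (((Nat.mem_divisorsAntidiagonal.mp hxa).1).symm.trans
      (Nat.mem_divisorsAntidiagonal.mp hxb).1)
  rw [← Finset.sum_biUnion hdisj]
  set E := F.biUnion Nat.divisors with hE
  have hsub : F.biUnion Nat.divisorsAntidiagonal ⊆ E ×ˢ E := by
    intro x hx
    obtain ⟨n, hn, hxn⟩ := Finset.mem_biUnion.mp hx
    exact Finset.mem_product.mpr
      ⟨Finset.mem_biUnion.mpr ⟨n, hn, Nat.fst_mem_divisors_of_mem_antidiagonal hxn⟩,
       Finset.mem_biUnion.mpr ⟨n, hn, Nat.snd_mem_divisors_of_mem_antidiagonal hxn⟩⟩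
  have hsq : ∑ x ∈ F.biUnion Nat.divisorsAntidiagonal, f x.1 * f x.2
      ≤ (∑ m ∈ E, f m) ^ 2 := by
    calc ∑ x ∈ F.biUnion Nat.divisorsAntidiagonal, f x.1 * f x.2
        ≤ ∑ x ∈ E ×ˢ E, f x.1 * f x.2 :=
          Finset.sum_le_sum_of_subset_of_nonneg hsub
            (fun x _ _ => mul_nonneg (hnn _) (hnn _))
      _ = (∑ m ∈ E, f m) ^ 2 := by rw [Finset.sum_product, ← Finset.sum_mul_sum, sq]
  refine hsq.trans ?_
  have hA : ∑ m ∈ E, f m ≤ (1 + 1 / (σ - 1)) ^ α * Real.exp (α ^ 2 / (1 - α / 2)) := by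
    have := lemA h1 h2 hσ E
    calc ∑ m ∈ E, f m = ∑ m ∈ E, α ^ OmN m * (m : ℝ) ^ (-σ) :=
          Finset.sum_congr rfl fun m _ => by rw [hf, gm_apply]
      _ ≤ _ := this
  have h0 : (0:ℝ) ≤ ∑ m ∈ E, f m := Finset.sum_nonneg fun m _ => hnn m
  exact pow_le_pow_left₀ h0 hA 2

/-- The dominating function. -/
noncomputable def Gb (α t : ℝ) : ℝ :=
  (Real.exp (α ^ 2 / (1 - α / 2))) ^ 2 *
    ((8 * t ^ ((7:ℝ) - 2 * α) + 128 * t ^ ((3:ℝ) - 2 * α)) * Real.exp (-(Real.log 2 / 2 * t)))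

lemma pointwise_bound {α : ℝ} (h1 : 1 < α) (h2 : α < 2) (F' : Finset ℕ)
    (hF' : ∀ n ∈ F', 2 ≤ n) {t : ℝ} (ht : 0 < t) :
    ∑ n ∈ F', ((n.divisors.card : ℝ) * α ^ OmN n / n) *
        (t ^ ((4:ℝ) - 1) * Real.exp (-(Real.log n * t)))
      ≤ Gb α t := by
  have hc2 : (0:ℝ) < Real.log 2 := Real.log_pos one_lt_two
  set σ := 1 + t / 2 with hσdef
  have hσ : 1 < σ := by rw [hσdef]; linarith
  set K := (Real.exp (α ^ 2 / (1 - α / 2))) ^ 2 with hK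
  have hKnn : 0 ≤ K := sq_nonneg _
  have h2t : (0:ℝ) < 2 ^ (-(t/2)) := Real.rpow_pos_of_pos two_pos _
  -- termwise bound
  have hterm : ∀ n ∈ F', ((n.divisors.card : ℝ) * α ^ OmN n / n) *
      (t ^ ((4:ℝ) - 1) * Real.exp (-(Real.log n * t)))
      ≤ (t ^ ((4:ℝ) - 1) * 2 ^ (-(t/2))) *
        ((n.divisors.card : ℝ) * α ^ OmN n * (n:ℝ) ^ (-σ)) := by
    intro n hn
    have hn2 : 2 ≤ n := hF' n hn
    have hnpos : (0:ℝ) < n := by exact_mod_cast Nat.lt_of_lt_of_le two_pos hn2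
    have hn2' : (2:ℝ) ≤ n := by exact_mod_cast hn2
    have hexp : Real.exp (-(Real.log n * t)) = (n:ℝ) ^ (-t) := by
      rw [Real.rpow_def_of_pos hnpos, mul_neg]
    have hsplit : (n:ℝ)⁻¹ * (n:ℝ) ^ (-t) = (n:ℝ) ^ (-(t/2)) * (n:ℝ) ^ (-σ) := by
      rw [← Real.rpow_neg_one (n:ℝ), ← Real.rpow_add hnpos, ← Real.rpow_add hnpos]
      congr 1
      rw [hσdef]; ring
    have hmono : (n:ℝ) ^ (-(t/2)) ≤ (2:ℝ) ^ (-(t/2)) := by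
      rw [Real.rpow_neg hnpos.le, Real.rpow_neg (by norm_num : (0:ℝ) ≤ 2)]
      rw [inv_le_inv₀ (Real.rpow_pos_of_pos hnpos _) (Real.rpow_pos_of_pos two_pos _)]
      exact Real.rpow_le_rpow (by norm_num) hn2' (by linarith)
    have hDnn : (0:ℝ) ≤ (n.divisors.card : ℝ) * α ^ OmN n := by positivity
    have htnn : (0:ℝ) ≤ t ^ ((4:ℝ) - 1) := Real.rpow_nonneg ht.le _
    have hnσ : (0:ℝ) ≤ (n:ℝ) ^ (-σ) := Real.rpow_nonneg hnpos.le _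
    calc ((n.divisors.card : ℝ) * α ^ OmN n / n) *
        (t ^ ((4:ℝ) - 1) * Real.exp (-(Real.log n * t)))
        = (t ^ ((4:ℝ) - 1)) * (((n.divisors.card : ℝ) * α ^ OmN n) *
            ((n:ℝ)⁻¹ * (n:ℝ) ^ (-t))) := by rw [hexp]; ring
      _ = (t ^ ((4:ℝ) - 1)) * (((n.divisors.card : ℝ) * α ^ OmN n) *
            ((n:ℝ) ^ (-(t/2)) * (n:ℝ) ^ (-σ))) := by rw [hsplit]
      _ ≤ (t ^ ((4:ℝ) - 1)) * (((n.divisors.card : ℝ) * α ^ OmN n) *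
            ((2:ℝ) ^ (-(t/2)) * (n:ℝ) ^ (-σ))) := by
          apply mul_le_mul_of_nonneg_left _ htnn
          apply mul_le_mul_of_nonneg_left _ hDnn
          exact mul_le_mul_of_nonneg_right hmono hnσ
      _ = (t ^ ((4:ℝ) - 1) * 2 ^ (-(t/2))) *
            ((n.divisors.card : ℝ) * α ^ OmN n * (n:ℝ) ^ (-σ)) := by ring
  have hsum : ∑ n ∈ F', ((n.divisors.card : ℝ) * α ^ OmN n / n) *
      (t ^ ((4:ℝ) - 1) * Real.exp (-(Real.log n * t)))
      ≤ (t ^ ((4:ℝ) - 1) * 2 ^ (-(t/2))) *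
        (((1 + 1 / (σ - 1)) ^ α * Real.exp (α ^ 2 / (1 - α / 2))) ^ 2) := by
    calc ∑ n ∈ F', ((n.divisors.card : ℝ) * α ^ OmN n / n) *
          (t ^ ((4:ℝ) - 1) * Real.exp (-(Real.log n * t)))
        ≤ ∑ n ∈ F', (t ^ ((4:ℝ) - 1) * 2 ^ (-(t/2))) *
            ((n.divisors.card : ℝ) * α ^ OmN n * (n:ℝ) ^ (-σ)) := Finset.sum_le_sum hterm
      _ = (t ^ ((4:ℝ) - 1) * 2 ^ (-(t/2))) *
            ∑ n ∈ F', ((n.divisors.card : ℝ) * α ^ OmN n * (n:ℝ) ^ (-σ)) := by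
          rw [Finset.mul_sum]
      _ ≤ _ := by
          apply mul_le_mul_of_nonneg_left (lemB h1 h2 hσ F')
          have := Real.rpow_nonneg ht.le ((4:ℝ) - 1)
          positivity
  refine hsum.trans ?_
  -- now the pure-calculus bound
  have h1t : (0:ℝ) < 1 + 2 / t := by positivity
  have hA2 : ((1 + 1 / (σ - 1)) ^ α * Real.exp (α ^ 2 / (1 - α / 2))) ^ 2
      = (1 + 2 / t) ^ (2 * α) * K := by
    have hσ1 : σ - 1 = t / 2 := by rw [hσdef]; ring
    have : (1:ℝ) / (σ - 1) = 2 / t := by rw [hσ1]; field_simp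
    rw [this, hK, mul_pow, ← Real.rpow_natCast ((1 + 2/t) ^ α) 2, ← Real.rpow_mul h1t.le]
    norm_num [mul_comm]
  rw [hA2]
  have hexp2 : (2:ℝ) ^ (-(t/2)) = Real.exp (-(Real.log 2 / 2 * t)) := by
    rw [Real.rpow_def_of_pos two_pos]
    congr 1
    ring
  have hfrac : (1 + 2 / t) = (t + 2) / t := by field_simp
  have hpow : (1 + 2 / t) ^ (2 * α) = (t + 2) ^ (2 * α) * ((t:ℝ) ^ (2 * α))⁻¹ := by
    rw [hfrac, Real.div_rpow (by linarith) ht.le, div_eq_mul_inv]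
  have hbound4 : (t + 2) ^ (2 * α) ≤ 8 * t ^ (4:ℕ) + 128 := by
    calc (t + 2) ^ (2 * α) ≤ (t + 2) ^ (4:ℝ) :=
          Real.rpow_le_rpow_of_exponent_le (by linarith) (by linarith)
      _ = (t + 2) ^ (4:ℕ) := by
          rw [← Real.rpow_natCast (t + 2) 4]; norm_num
      _ ≤ 8 * t ^ (4:ℕ) + 128 := by nlinarith [sq_nonneg (t - 2), sq_nonneg (t^2 - 4), sq_nonneg t, ht.le]
  -- final algebra
  have ht3 : t ^ ((4:ℝ) - 1) * ((t:ℝ) ^ (2 * α))⁻¹ = t ^ ((3:ℝ) - 2 * α) := by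
    rw [show (4:ℝ) - 1 = 3 by norm_num, show (3:ℝ) - 2*α = 3 - 2*α from rfl,
      Real.rpow_sub ht, div_eq_mul_inv]
  have ht7 : t ^ (4:ℕ) * t ^ ((3:ℝ) - 2 * α) = t ^ ((7:ℝ) - 2 * α) := by
    rw [← Real.rpow_natCast t 4, ← Real.rpow_add ht]
    congr 1
    push_cast
    ring
  have htinv : (0:ℝ) ≤ ((t:ℝ) ^ (2 * α))⁻¹ := by positivity
  have hexpnn : (0:ℝ) ≤ Real.exp (-(Real.log 2 / 2 * t)) := (Real.exp_pos _).le
  calc t ^ ((4:ℝ) - 1) * 2 ^ (-(t/2)) * ((1 + 2 / t) ^ (2 * α) * K)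
      = K * ((t ^ ((4:ℝ) - 1) * ((t:ℝ) ^ (2 * α))⁻¹ * (t + 2) ^ (2 * α)) *
          Real.exp (-(Real.log 2 / 2 * t))) := by
        rw [hpow, hexp2]; ring
    _ = K * (((t + 2) ^ (2 * α) * t ^ ((3:ℝ) - 2 * α)) *
          Real.exp (-(Real.log 2 / 2 * t))) := by rw [ht3]; ring_nf
    _ ≤ K * (((8 * t ^ (4:ℕ) + 128) * t ^ ((3:ℝ) - 2 * α)) *
          Real.exp (-(Real.log 2 / 2 * t))) := by
        apply mul_le_mul_of_nonneg_left _ hKnn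
        apply mul_le_mul_of_nonneg_right _ hexpnn
        apply mul_le_mul_of_nonneg_right hbound4 (Real.rpow_nonneg ht.le _)
    _ = Gb α t := by
        rw [Gb, hK]
        rw [show (8 * t ^ (4:ℕ) + 128) * t ^ ((3:ℝ) - 2 * α)
          = 8 * (t ^ (4:ℕ) * t ^ ((3:ℝ) - 2 * α)) + 128 * t ^ ((3:ℝ) - 2 * α) from by ring, ht7]

/-- Integrability of `t^(a-1) exp(-rt)` on `(0,∞)`. -/
lemma integrable_rpow_exp {a r : ℝ} (ha : 0 < a) (hr : 0 < r) :
    IntegrableOn (fun t : ℝ => t ^ (a - 1) * Real.exp (-(r * t))) (Set.Ioi 0) := by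
  have h := Real.GammaIntegral_convergent ha
  rw [← mul_zero r, ← integrableOn_Ioi_comp_mul_left_iff _ _ hr] at h
  have h2 := h.const_mul (r ^ (1 - a))
  refine IntegrableOn.congr_fun (s := Set.Ioi 0) h2 (fun t ht => ?_) measurableSet_Ioi
  have ht0 : (0:ℝ) < t := by simpa using ht
  rw [Real.mul_rpow hr.le ht0.le]
  have h1 : r ^ (1 - a) * r ^ (a - 1) = 1 := by
    rw [← Real.rpow_add hr]
    norm_num
  rw [show r ^ (1 - a) * (Real.exp (-(r * t)) * (r ^ (a - 1) * t ^ (a - 1)))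
      = r ^ (1 - a) * r ^ (a - 1) * (Real.exp (-(r * t)) * t ^ (a - 1)) from by ring,
    h1, one_mul, mul_comm]

end Statement15Aux

/-- For every `1 < α < 2`, the series `∑_{n≥2} d(n) α^{Ω(n)} / (n (log n)⁴)`
converges, where `d(n)` is the number of divisors of `n` and `Ω(n)` the number
of prime factors of `n` counted with multiplicity. -/
theorem statement15 (α : ℝ) (h1 : 1 < α) (h2 : α < 2) :
    Summable (fun n : ℕ =>
      if 2 ≤ n then
        (n.divisors.card : ℝ) * α ^ (n.factorization.sum fun _ k => k) /
          ((n : ℝ) * Real.log (n : ℝ) ^ 4)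
      else 0) := by
  classical
  open Statement15Aux in
  have hα0 : (0:ℝ) < α := by linarith
  have hlog2 : (0:ℝ) < Real.log 2 := Real.log_pos one_lt_two
  have hcpos : (0:ℝ) < Real.log 2 / 2 := by linarith
  -- integrability of the dominating function
  have hint1 : MeasureTheory.IntegrableOn
      (fun t : ℝ => t ^ ((8 - 2*α : ℝ) - 1) * Real.exp (-(Real.log 2 / 2 * t)))
      (Set.Ioi 0) := Statement15Aux.integrable_rpow_exp (by linarith) hcpos
  have hint2 : MeasureTheory.IntegrableOn
      (fun t : ℝ => t ^ ((4 - 2*α : ℝ) - 1) * Real.exp (-(Real.log 2 / 2 * t)))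
      (Set.Ioi 0) := Statement15Aux.integrable_rpow_exp (by linarith) hcpos
  have hGbint : MeasureTheory.IntegrableOn (Statement15Aux.Gb α) (Set.Ioi 0) := by
    have h := ((hint1.const_mul 8).add (hint2.const_mul 128)).const_mul
      ((Real.exp (α ^ 2 / (1 - α / 2))) ^ 2)
    refine MeasureTheory.IntegrableOn.congr_fun (s := Set.Ioi 0) h (fun t _ => ?_)
      measurableSet_Ioi
    rw [Statement15Aux.Gb, show (7:ℝ) - 2*α = (8 - 2*α) - 1 from by ring,
      show (3:ℝ) - 2*α = (4 - 2*α) - 1 from by ring]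
    simp only [Pi.add_apply]
    ring
  set M := ∫ t in Set.Ioi 0, Statement15Aux.Gb α t with hM
  refine summable_of_sum_le (c := 1/6 * M) ?_ ?_
  · intro n
    dsimp only
    split_ifs with hn
    · have hL4 : (0:ℝ) ≤ Real.log n ^ 4 := by
        rw [show (Real.log n) ^ 4 = ((Real.log n) ^ 2) ^ 2 from by ring]
        exact sq_nonneg _
      exact div_nonneg (mul_nonneg (Nat.cast_nonneg _) (pow_nonneg hα0.le _))
        (mul_nonneg (Nat.cast_nonneg _) hL4)
    · exact le_refl 0
  · intro u
    rw [← Finset.sum_filter]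
    set F' := u.filter (fun n => 2 ≤ n) with hF'def
    have hF' : ∀ n ∈ F', 2 ≤ n := fun n hn => (Finset.mem_filter.mp hn).2
    have hLpos : ∀ n ∈ F', (0:ℝ) < Real.log n := by
      intro n hn
      exact Real.log_pos (by exact_mod_cast Nat.lt_of_lt_of_le one_lt_two (hF' n hn))
    have hIntegr : ∀ n ∈ F', MeasureTheory.IntegrableOn
        (fun t => ((n.divisors.card : ℝ) * α ^ Statement15Aux.OmN n / n) *
          (t ^ ((4:ℝ) - 1) * Real.exp (-(Real.log n * t)))) (Set.Ioi 0) :=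
      fun n hn =>
        (Statement15Aux.integrable_rpow_exp (by norm_num) (hLpos n hn)).const_mul _
    have hid : ∀ n ∈ F', (n.divisors.card : ℝ) *
        α ^ (n.factorization.sum fun _ k => k) / ((n : ℝ) * Real.log (n : ℝ) ^ 4)
        = (1/6) * ∫ t in Set.Ioi 0, ((n.divisors.card : ℝ) * α ^ Statement15Aux.OmN n / n) *
            (t ^ ((4:ℝ) - 1) * Real.exp (-(Real.log n * t))) := by
      intro n hn
      have hL := hLpos n hn
      have hnpos : (0:ℝ) < n := by
        exact_mod_cast Nat.lt_of_lt_of_le two_pos (hF' n hn)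
      rw [MeasureTheory.integral_const_mul,
        integral_rpow_mul_exp_neg_mul_Ioi (by norm_num : (0:ℝ) < 4) hL]
      have hΓ : Real.Gamma 4 = 6 := by
        rw [show (4:ℝ) = ((3:ℕ):ℝ) + 1 from by norm_num, Real.Gamma_nat_eq_factorial]
        norm_num [Nat.factorial]
      rw [hΓ, show ((1:ℝ)/Real.log n) ^ (4:ℝ) = ((1:ℝ)/Real.log n) ^ (4:ℕ) from by
        rw [← Real.rpow_natCast]; norm_num]
      have : (n.factorization.sum fun _ k => k) = Statement15Aux.OmN n := rfl
      rw [this]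
      field_simp
    calc ∑ n ∈ F', (n.divisors.card : ℝ) *
          α ^ (n.factorization.sum fun _ k => k) / ((n : ℝ) * Real.log (n : ℝ) ^ 4)
        = (1/6) * ∑ n ∈ F', ∫ t in Set.Ioi 0,
            ((n.divisors.card : ℝ) * α ^ Statement15Aux.OmN n / n) *
              (t ^ ((4:ℝ) - 1) * Real.exp (-(Real.log n * t))) := by
          rw [Finset.sum_congr rfl hid, Finset.mul_sum]
      _ = (1/6) * ∫ t in Set.Ioi 0, ∑ n ∈ F',
            ((n.divisors.card : ℝ) * α ^ Statement15Aux.OmN n / n) *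
              (t ^ ((4:ℝ) - 1) * Real.exp (-(Real.log n * t))) := by
          rw [MeasureTheory.integral_finset_sum F' hIntegr]
      _ ≤ 1/6 * M := by
          have hmono : (∫ t in Set.Ioi 0, ∑ n ∈ F',
              ((n.divisors.card : ℝ) * α ^ Statement15Aux.OmN n / n) *
                (t ^ ((4:ℝ) - 1) * Real.exp (-(Real.log n * t)))) ≤ M := by
            rw [hM]
            apply MeasureTheory.integral_mono_of_nonneg
            · rw [Filter.EventuallyLE]
              refine (MeasureTheory.ae_restrict_iff' measurableSet_Ioi).mpr
                (Filter.Eventually.of_forall fun t ht => ?_)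
              have ht0 : (0:ℝ) < t := ht
              refine Finset.sum_nonneg fun n hn => ?_
              have h3 : (0:ℝ) ≤ t ^ ((4:ℝ) - 1) := Real.rpow_nonneg ht0.le _
              have hD : (0:ℝ) ≤ (n.divisors.card : ℝ) * α ^ Statement15Aux.OmN n / n :=
                div_nonneg (mul_nonneg (Nat.cast_nonneg _) (pow_nonneg hα0.le _))
                  (Nat.cast_nonneg _)
              exact mul_nonneg hD (mul_nonneg h3 (Real.exp_pos _).le)
            · exact hGbint
            · rw [Filter.EventuallyLE]
              refine (MeasureTheory.ae_restrict_iff' measurableSet_Ioi).mpr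
                (Filter.Eventually.of_forall fun t ht => ?_)
              exact Statement15Aux.pointwise_bound h1 h2 F' hF' ht
          linarith
end
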